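/- arXiv:2209.14891 — 2 statements merged into one kernel-verified Lean document; each statement's English description precedes it below -/
import Mathlib

section
/- Suppose Σ(d) = ε₁ε₂ μ(d) μ(d)^T + ε₁Ψ₁(d) + ε₂Ψ₂(d) with fixed ε₁, ε₂ > 0, ε₁+ε₂=1, and suppose λ_max(Ψ_s(d))/‖μ(d)‖² → 0 as d → ∞ for s = 1, 2. Then λ₁(Σ(d))/(ε₁ε₂‖μ(d)‖²) → 1 as d → ∞. -/
open Filter Matrix


lemma star_mulVec_eq_vecMul' {n : Type*} [Fintype n] (U : Matrix n n ℝ) (x : n → ℝ) :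
    star U *ᵥ x = x ᵥ* U := by
  have hUU : (Uᴴ)ᵀ = U := by ext i j; simp
  rw [star_eq_conjTranspose, ← vecMul_transpose, hUU]

lemma quad_eq' {n : Type*} [Fintype n] [DecidableEq n] {A : Matrix n n ℝ}
    (hA : A.IsHermitian) (x : n → ℝ) :
    x ⬝ᵥ (A *ᵥ x) = ∑ i, hA.eigenvalues i *
      ((star (hA.eigenvectorUnitary : Matrix n n ℝ) *ᵥ x) i)^2 := by
  set U := (hA.eigenvectorUnitary : Matrix n n ℝ)
  set y := star U *ᵥ x with hy
  conv_lhs => rw [hA.spectral_theorem]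
  rw [Unitary.conjStarAlgAut_apply, ← mulVec_mulVec, ← mulVec_mulVec, dotProduct_mulVec]
  rw [show x ᵥ* U = y by rw [hy, star_mulVec_eq_vecMul']]
  simp [mulVec_diagonal, dotProduct, Function.comp, mul_comm, sq, mul_assoc, mul_left_comm]
  rfl

lemma norm_eq' {n : Type*} [Fintype n] [DecidableEq n] {A : Matrix n n ℝ}
    (hA : A.IsHermitian) (x : n → ℝ) :
    (star (hA.eigenvectorUnitary : Matrix n n ℝ) *ᵥ x) ⬝ᵥ
      (star (hA.eigenvectorUnitary : Matrix n n ℝ) *ᵥ x) = x ⬝ᵥ x := by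
  set U := (hA.eigenvectorUnitary : Matrix n n ℝ)
  have h1 : U * star U = 1 := Unitary.mul_star_self_of_mem hA.eigenvectorUnitary.2
  calc (star U *ᵥ x) ⬝ᵥ (star U *ᵥ x) = (x ᵥ* U) ⬝ᵥ (star U *ᵥ x) := by
        rw [star_mulVec_eq_vecMul']
    _ = x ⬝ᵥ ((U * star U) *ᵥ x) := by rw [← dotProduct_mulVec, mulVec_mulVec]
    _ = x ⬝ᵥ x := by rw [h1, one_mulVec]

/-- Rayleigh upper bound: quadratic form is at most `λmax * ‖x‖²`. -/
lemma quad_le_iSup {n : Type*} [Fintype n] [DecidableEq n] [Nonempty n] {A : Matrix n n ℝ}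
    (hA : A.IsHermitian) (x : n → ℝ) :
    x ⬝ᵥ (A *ᵥ x) ≤ (⨆ i, hA.eigenvalues i) * (x ⬝ᵥ x) := by
  rw [quad_eq' hA x, ← norm_eq' hA x]
  set y := star (hA.eigenvectorUnitary : Matrix n n ℝ) *ᵥ x
  have hdot : y ⬝ᵥ y = ∑ i, (y i)^2 := by simp [dotProduct, sq]
  rw [hdot, Finset.mul_sum]
  refine Finset.sum_le_sum fun i _ => ?_
  exact mul_le_mul_of_nonneg_right
    (le_ciSup (Set.Finite.bddAbove (Set.finite_range _)) i) (sq_nonneg _)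

/-- λmax is attained as the quadratic form of a unit vector. -/
lemma exists_unit_quad_eq_iSup {n : Type*} [Fintype n] [DecidableEq n] [Nonempty n]
    {A : Matrix n n ℝ} (hA : A.IsHermitian) :
    ∃ v : n → ℝ, v ⬝ᵥ v = 1 ∧ v ⬝ᵥ (A *ᵥ v) = ⨆ i, hA.eigenvalues i := by
  obtain ⟨i, hi⟩ := exists_eq_ciSup_of_finite (f := hA.eigenvalues)
  have hn : ‖hA.eigenvectorBasis i‖ = 1 := hA.eigenvectorBasis.orthonormal.1 i
  have h1 : ((hA.eigenvectorBasis i : n → ℝ)) ⬝ᵥ (hA.eigenvectorBasis i : n → ℝ) = 1 := by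
    have hinner : (inner (𝕜 := ℝ) (hA.eigenvectorBasis i) (hA.eigenvectorBasis i) : ℝ) = 1 := by
      rw [real_inner_self_eq_norm_sq, hn]; norm_num
    rw [← hinner, PiLp.inner_apply]
    simp [dotProduct, sq]
  refine ⟨⇑(hA.eigenvectorBasis i), h1, ?_⟩
  rw [hA.mulVec_eigenvectorBasis i, dotProduct_smul, smul_eq_mul]
  erw [h1]
  rw [mul_one, hi]

lemma quad_vecMulVec {n : Type*} [Fintype n] (w x : n → ℝ) :
    x ⬝ᵥ (vecMulVec w w *ᵥ x) = (w ⬝ᵥ x)^2 := by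
  simp only [mulVec, dotProduct, vecMulVec_apply, sq]
  rw [Finset.sum_mul_sum]
  congr 1; ext i; rw [Finset.mul_sum]; congr 1; ext j; ring

lemma psd_quad_nonneg {n : Type*} [Fintype n] {A : Matrix n n ℝ}
    (hA : A.PosSemidef) (x : n → ℝ) : 0 ≤ x ⬝ᵥ (A *ᵥ x) := by
  have := hA.dotProduct_mulVec_nonneg x
  simpa using this

/-- If `λ_max(Ψ_s(d))/‖μ(d)‖² → 0` for `s = 1,2`, then the largest eigenvalue of
`Σ(d) = ε₁ε₂ μμᵀ + ε₁Ψ₁ + ε₂Ψ₂` satisfies `λ₁/(ε₁ε₂‖μ‖²) → 1` as `d → ∞`. -/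
theorem stmt7 (ε₁ ε₂ : ℝ) (hε₁ : 0 < ε₁) (hε₂ : 0 < ε₂) (hsum : ε₁ + ε₂ = 1)
    (μ : (d : ℕ) → Fin (d + 1) → ℝ) (hμ : ∀ d, μ d ≠ 0)
    (Ψ₁ Ψ₂ : (d : ℕ) → Matrix (Fin (d + 1)) (Fin (d + 1)) ℝ)
    (hΨ₁ : ∀ d, (Ψ₁ d).PosSemidef) (hΨ₂ : ∀ d, (Ψ₂ d).PosSemidef)
    (S : (d : ℕ) → Matrix (Fin (d + 1)) (Fin (d + 1)) ℝ)
    (hS : ∀ d, S d = (ε₁ * ε₂) • Matrix.vecMulVec (μ d) (μ d) + ε₁ • Ψ₁ d + ε₂ • Ψ₂ d)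
    (hherm : ∀ d, (S d).IsHermitian)
    (hlim₁ : Tendsto
      (fun d => (⨆ i, (hΨ₁ d).isHermitian.eigenvalues i) / (∑ i, μ d i ^ 2))
      atTop (nhds 0))
    (hlim₂ : Tendsto
      (fun d => (⨆ i, (hΨ₂ d).isHermitian.eigenvalues i) / (∑ i, μ d i ^ 2))
      atTop (nhds 0)) :
    Tendsto (fun d => (⨆ i, (hherm d).eigenvalues i) / (ε₁ * ε₂ * ∑ i, μ d i ^ 2))
      atTop (nhds 1) := by
  set L : ℕ → ℝ := fun d => ⨆ i, (hherm d).eigenvalues i with hL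
  set M₁ : ℕ → ℝ := fun d => ⨆ i, (hΨ₁ d).isHermitian.eigenvalues i with hM₁
  set M₂ : ℕ → ℝ := fun d => ⨆ i, (hΨ₂ d).isHermitian.eigenvalues i with hM₂
  set N : ℕ → ℝ := fun d => ∑ i, μ d i ^ 2 with hN
  have hNdot : ∀ d, μ d ⬝ᵥ μ d = N d := by
    intro d; simp [hN, dotProduct, sq]
  have hNpos : ∀ d, 0 < N d := by
    intro d
    obtain ⟨i, hi⟩ := Function.ne_iff.mp (hμ d)
    exact Finset.sum_pos' (fun j _ => sq_nonneg _)
      ⟨i, Finset.mem_univ i, pow_pos (abs_pos.mpr hi) 2 |>.trans_eq (by rw [sq_abs])⟩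
  have hM₁nonneg : ∀ d, 0 ≤ M₁ d := fun d =>
    le_trans ((hΨ₁ d).eigenvalues_nonneg (0 : Fin (d+1)))
      (le_ciSup (Set.Finite.bddAbove (Set.finite_range _)) _)
  have hM₂nonneg : ∀ d, 0 ≤ M₂ d := fun d =>
    le_trans ((hΨ₂ d).eigenvalues_nonneg (0 : Fin (d+1)))
      (le_ciSup (Set.Finite.bddAbove (Set.finite_range _)) _)
  -- lower bound: ε₁ε₂ N ≤ L
  have hlow : ∀ d, ε₁ * ε₂ * N d ≤ L d := by
    intro d
    have hq := quad_le_iSup (hherm d) (μ d)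
    rw [hNdot] at hq
    have hexp : μ d ⬝ᵥ (S d *ᵥ μ d) =
        ε₁ * ε₂ * (N d)^2 + ε₁ * (μ d ⬝ᵥ (Ψ₁ d *ᵥ μ d)) + ε₂ * (μ d ⬝ᵥ (Ψ₂ d *ᵥ μ d)) := by
      rw [hS d]
      simp only [add_mulVec, smul_mulVec, dotProduct_add, dotProduct_smul, smul_eq_mul]
      rw [quad_vecMulVec, hNdot]
    have h1 := psd_quad_nonneg (hΨ₁ d) (μ d)
    have h2 := psd_quad_nonneg (hΨ₂ d) (μ d)
    have hge : ε₁ * ε₂ * (N d)^2 ≤ μ d ⬝ᵥ (S d *ᵥ μ d) := by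
      rw [hexp]; nlinarith
    have : ε₁ * ε₂ * (N d)^2 ≤ L d * N d := le_trans hge hq
    have hN' := hNpos d
    nlinarith
  -- upper bound
  have hup : ∀ d, L d ≤ ε₁ * ε₂ * N d + ε₁ * M₁ d + ε₂ * M₂ d := by
    intro d
    obtain ⟨v, hv1, hvq⟩ := exists_unit_quad_eq_iSup (hherm d)
    rw [hL]; dsimp only; rw [← hvq, hS d]
    simp only [add_mulVec, smul_mulVec, dotProduct_add, dotProduct_smul, smul_eq_mul]
    rw [quad_vecMulVec]
    have hcs : (μ d ⬝ᵥ v)^2 ≤ N d := by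
      have := Finset.sum_mul_sq_le_sq_mul_sq Finset.univ (μ d) v
      have hv1' : ∑ i, v i ^ 2 = 1 := by
        rw [← hv1]; simp [dotProduct, sq]
      calc (μ d ⬝ᵥ v)^2 = (∑ i, μ d i * v i)^2 := rfl
        _ ≤ (∑ i, μ d i ^ 2) * ∑ i, v i ^ 2 := this
        _ = N d := by rw [hv1', hN]; ring
    have hq1 : v ⬝ᵥ (Ψ₁ d *ᵥ v) ≤ M₁ d := by
      have := quad_le_iSup (hΨ₁ d).isHermitian v
      rwa [hv1, mul_one] at this
    have hq2 : v ⬝ᵥ (Ψ₂ d *ᵥ v) ≤ M₂ d := by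
      have := quad_le_iSup (hΨ₂ d).isHermitian v
      rwa [hv1, mul_one] at this
    linarith [mul_le_mul_of_nonneg_left hcs (mul_pos hε₁ hε₂).le,
      mul_le_mul_of_nonneg_left hq1 hε₁.le, mul_le_mul_of_nonneg_left hq2 hε₂.le]
  -- squeeze
  have hlowdiv : ∀ d, 1 ≤ L d / (ε₁ * ε₂ * N d) := by
    intro d
    rw [le_div_iff₀ (mul_pos (mul_pos hε₁ hε₂) (hNpos d)), one_mul]
    exact hlow d
  have hupdiv : ∀ d, L d / (ε₁ * ε₂ * N d) ≤
      1 + ε₂⁻¹ * (M₁ d / N d) + ε₁⁻¹ * (M₂ d / N d) := by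
    intro d
    have hpos : (0:ℝ) < ε₁ * ε₂ * N d := mul_pos (mul_pos hε₁ hε₂) (hNpos d)
    rw [div_le_iff₀ hpos]
    have hN' := (hNpos d).ne'
    have e : (1 + ε₂⁻¹ * (M₁ d / N d) + ε₁⁻¹ * (M₂ d / N d)) * (ε₁ * ε₂ * N d)
        = ε₁ * ε₂ * N d + ε₁ * M₁ d + ε₂ * M₂ d := by
      field_simp
    rw [e]
    exact hup d
  have hg : Tendsto (fun d => 1 + ε₂⁻¹ * (M₁ d / N d) + ε₁⁻¹ * (M₂ d / N d))
      atTop (nhds 1) := by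
    have := ((tendsto_const_nhds (x := (1:ℝ)) (f := atTop)).add
      (hlim₁.const_mul ε₂⁻¹)).add (hlim₂.const_mul ε₁⁻¹)
    simpa using this
  exact tendsto_of_tendsto_of_tendsto_of_le_of_le tendsto_const_nhds hg hlowdiv hupdiv
end

section
/- Suppose Σ(d) = ε₁ε₂ μ(d) μ(d)^T + ε₁Ψ₁(d) + ε₂Ψ₂(d) with fixed ε₁, ε₂ > 0, ε₁+ε₂=1, and λ_max(Ψ_s(d))/‖μ(d)‖² → 0 as d → ∞ for s = 1, 2. Let h₁(d) be a unit first eigenvector of Σ(d) with h₁(d)^T μ(d) ≥ 0. Then the angle between h₁(d) and μ(d) converges to 0, i.e., h₁(d)^T μ(d)/‖μ(d)‖ → 1 as d → ∞. -/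
open Filter Matrix

lemma aux_unitary_conj {n : Type*} [Fintype n] [DecidableEq n] (U : Matrix n n ℝ) (ev : n → ℝ)
    (hUU : U * star U = 1) (x : n → ℝ) :
    x ⬝ᵥ (U * Matrix.diagonal ev * star U) *ᵥ x = ∑ i, ev i * (star U *ᵥ x) i ^ 2 ∧
      x ⬝ᵥ x = ∑ i, (star U *ᵥ x) i ^ 2 := by
  have hsU : star U = Uᵀ := by
    rw [Matrix.star_eq_conjTranspose, Matrix.conjTranspose_eq_transpose_of_trivial]
  set y := star U *ᵥ x with hy
  have hxU : x ᵥ* U = y := by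
    rw [hy, ← Matrix.mulVec_transpose, hsU]
  constructor
  · rw [← Matrix.mulVec_mulVec, ← Matrix.mulVec_mulVec, Matrix.dotProduct_mulVec x U, hxU]
    simp only [Matrix.mulVec_diagonal, dotProduct]
    exact Finset.sum_congr rfl fun i _ => by ring
  · have : y ⬝ᵥ y = x ⬝ᵥ x := by
      rw [hy, Matrix.dotProduct_mulVec, ← Matrix.mulVec_transpose, hsU, Matrix.transpose_transpose,
        Matrix.mulVec_mulVec, ← hsU, hUU, Matrix.one_mulVec]
    rw [← this]; simp [dotProduct, sq]

/-- Rayleigh quotient upper bound: `xᵀ A x ≤ λ_max ‖x‖²` for a real symmetric matrix. -/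
lemma aux_rayleigh_le {n : Type*} [Fintype n] [DecidableEq n] [Nonempty n]
    {A : Matrix n n ℝ} (hA : A.IsHermitian) (x : n → ℝ) :
    x ⬝ᵥ A *ᵥ x ≤ (⨆ i, hA.eigenvalues i) * (x ⬝ᵥ x) := by
  have hspec := hA.spectral_theorem
  have hdiag : Matrix.diagonal (RCLike.ofReal ∘ hA.eigenvalues) = Matrix.diagonal hA.eigenvalues := by
    simp [Function.comp]
  rw [hdiag] at hspec
  have hUU : (hA.eigenvectorUnitary : Matrix n n ℝ) * star (hA.eigenvectorUnitary : Matrix n n ℝ) = 1 :=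
    (Matrix.mem_unitaryGroup_iff).mp hA.eigenvectorUnitary.2
  obtain ⟨h1, h2⟩ := aux_unitary_conj (hA.eigenvectorUnitary : Matrix n n ℝ) hA.eigenvalues hUU x
  have e1 : x ⬝ᵥ A *ᵥ x = ∑ i, hA.eigenvalues i * ((star (hA.eigenvectorUnitary : Matrix n n ℝ)) *ᵥ x) i ^ 2 := by
    rw [← h1]; exact congrArg (fun M => x ⬝ᵥ M *ᵥ x) hspec
  rw [e1, h2, Finset.mul_sum]
  exact Finset.sum_le_sum fun i _ => mul_le_mul_of_nonneg_right
    (le_ciSup (Set.Finite.bddAbove (Set.finite_range _)) i) (sq_nonneg _)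

lemma aux_psd_nonneg {n : Type*} [Fintype n] {A : Matrix n n ℝ} (hA : A.PosSemidef)
    (x : n → ℝ) : 0 ≤ x ⬝ᵥ A *ᵥ x := by
  have := hA.re_dotProduct_nonneg x
  simpa using this

lemma aux_vecMulVec_quad {n : Type*} [Fintype n] (v x : n → ℝ) :
    x ⬝ᵥ (Matrix.vecMulVec v v) *ᵥ x = (∑ i, x i * v i) ^ 2 := by
  simp only [dotProduct, Matrix.mulVec, Matrix.vecMulVec, Matrix.of_apply,
    dotProduct]
  rw [sq, Finset.sum_mul_sum]
  simp only [Finset.mul_sum]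
  exact Finset.sum_congr rfl fun i _ => Finset.sum_congr rfl fun j _ => by ring

/-- If `λ_max(Ψ_s(d))/‖μ(d)‖² → 0` for `s = 1,2`, then the unit first eigenvector
`h₁(d)` of `Σ(d)` (sign-normalized so `h₁ᵀμ ≥ 0`) satisfies
`h₁(d)ᵀμ(d)/‖μ(d)‖ → 1`, i.e. the angle between `h₁(d)` and `μ(d)` tends to 0. -/
theorem stmt8 (ε₁ ε₂ : ℝ) (hε₁ : 0 < ε₁) (hε₂ : 0 < ε₂) (hsum : ε₁ + ε₂ = 1)
    (μ : (d : ℕ) → Fin (d + 1) → ℝ) (hμ : ∀ d, μ d ≠ 0)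
    (Ψ₁ Ψ₂ : (d : ℕ) → Matrix (Fin (d + 1)) (Fin (d + 1)) ℝ)
    (hΨ₁ : ∀ d, (Ψ₁ d).PosSemidef) (hΨ₂ : ∀ d, (Ψ₂ d).PosSemidef)
    (S : (d : ℕ) → Matrix (Fin (d + 1)) (Fin (d + 1)) ℝ)
    (hS : ∀ d, S d = (ε₁ * ε₂) • Matrix.vecMulVec (μ d) (μ d) + ε₁ • Ψ₁ d + ε₂ • Ψ₂ d)
    (hherm : ∀ d, (S d).IsHermitian)
    (hlim₁ : Tendsto
      (fun d => (⨆ i, (hΨ₁ d).isHermitian.eigenvalues i) / (∑ i, μ d i ^ 2))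
      atTop (nhds 0))
    (hlim₂ : Tendsto
      (fun d => (⨆ i, (hΨ₂ d).isHermitian.eigenvalues i) / (∑ i, μ d i ^ 2))
      atTop (nhds 0))
    (h₁ : (d : ℕ) → Fin (d + 1) → ℝ)
    (hunit : ∀ d, (∑ i, h₁ d i ^ 2) = 1)
    (heig : ∀ d, (S d).mulVec (h₁ d) = (⨆ i, (hherm d).eigenvalues i) • h₁ d)
    (hsign : ∀ d, 0 ≤ ∑ i, h₁ d i * μ d i) :
    Tendsto (fun d => (∑ i, h₁ d i * μ d i) / Real.sqrt (∑ i, μ d i ^ 2))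
      atTop (nhds 1) := by
  -- notation
  set M₁ : ℕ → ℝ := fun d => ⨆ i, (hΨ₁ d).isHermitian.eigenvalues i with hM₁
  set M₂ : ℕ → ℝ := fun d => ⨆ i, (hΨ₂ d).isHermitian.eigenvalues i with hM₂
  set n2 : ℕ → ℝ := fun d => ∑ i, μ d i ^ 2 with hn2def
  set c : ℕ → ℝ := fun d => ∑ i, h₁ d i * μ d i with hcdef
  have hn2 : ∀ d, 0 < n2 d := by
    intro d
    obtain ⟨i, hi⟩ := Function.ne_iff.mp (hμ d)
    exact Finset.sum_pos' (fun j _ => sq_nonneg _)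
      ⟨i, Finset.mem_univ i, pow_two_pos_of_ne_zero hi⟩
  -- lower-bound function
  set g : ℕ → ℝ := fun d => 1 - ε₂⁻¹ * (M₁ d / n2 d) - ε₁⁻¹ * (M₂ d / n2 d) with hgdef
  have hg : Tendsto g atTop (nhds 1) := by
    have := ((hlim₁.const_mul ε₂⁻¹).const_sub 1).sub (hlim₂.const_mul ε₁⁻¹)
    simpa using this
  -- pointwise bounds
  have key : ∀ d, g d ≤ c d / Real.sqrt (n2 d) ∧ c d / Real.sqrt (n2 d) ≤ 1 := by
    intro d
    have hb : 0 < n2 d := hn2 d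
    have ha0 : 0 ≤ c d := hsign d
    -- quadratic form expansion lemma for S d
    have hquad : ∀ x : Fin (d + 1) → ℝ, x ⬝ᵥ (S d) *ᵥ x
        = ε₁ * ε₂ * (∑ i, x i * μ d i) ^ 2 + ε₁ * (x ⬝ᵥ (Ψ₁ d) *ᵥ x)
          + ε₂ * (x ⬝ᵥ (Ψ₂ d) *ᵥ x) := by
      intro x
      rw [hS d]
      simp only [Matrix.add_mulVec, Matrix.smul_mulVec, dotProduct_add,
        dotProduct_smul, smul_eq_mul]
      rw [aux_vecMulVec_quad]
    set lam : ℝ := ⨆ i, (hherm d).eigenvalues i with hlam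
    have hh2 : (h₁ d) ⬝ᵥ (h₁ d) = 1 := by
      simpa [dotProduct, sq] using hunit d
    -- λ = h₁ᵀ S h₁
    have hlam_eq : (h₁ d) ⬝ᵥ (S d) *ᵥ (h₁ d) = lam := by
      rw [heig d, dotProduct_smul, smul_eq_mul, hh2, mul_one]
    -- λ ≥ ε₁ε₂ n2
    have hlam_ge : ε₁ * ε₂ * n2 d ≤ lam := by
      have hray := aux_rayleigh_le (hherm d) (μ d)
      have hμμ : (μ d) ⬝ᵥ (μ d) = n2 d := by simp [dotProduct, sq, hn2def]
      have hq := hquad (μ d)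
      have h1' := aux_psd_nonneg (hΨ₁ d) (μ d)
      have h2' := aux_psd_nonneg (hΨ₂ d) (μ d)
      rw [hq, hμμ] at hray
      have hmm : (∑ i, μ d i * μ d i) = n2 d := by simp [hn2def, sq]
      rw [hmm] at hray
      nlinarith [hray, mul_pos hε₁ hε₂, hb]
    -- λ ≤ ε₁ε₂ c² + ε₁ M₁ + ε₂ M₂
    have hlam_le : lam ≤ ε₁ * ε₂ * (c d) ^ 2 + ε₁ * M₁ d + ε₂ * M₂ d := by
      have hq := hquad (h₁ d)
      rw [hq] at hlam_eq
      have hr1 := aux_rayleigh_le (hΨ₁ d).isHermitian (h₁ d)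
      have hr2 := aux_rayleigh_le (hΨ₂ d).isHermitian (h₁ d)
      rw [hh2, mul_one] at hr1 hr2
      have : (∑ i, h₁ d i * μ d i) = c d := rfl
      nlinarith [hr1, hr2, hε₁.le, hε₂.le]
    have hkey : ε₁ * ε₂ * n2 d ≤ ε₁ * ε₂ * (c d) ^ 2 + ε₁ * M₁ d + ε₂ * M₂ d :=
      le_trans hlam_ge hlam_le
    -- Cauchy–Schwarz: c² ≤ n2
    have hcs : (c d) ^ 2 ≤ n2 d := by
      have := Finset.sum_mul_sq_le_sq_mul_sq Finset.univ (h₁ d) (μ d)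
      rw [hunit d, one_mul] at this
      exact this
    -- now pure arithmetic
    have hs : 0 < Real.sqrt (n2 d) := Real.sqrt_pos.mpr hb
    have hs2 : Real.sqrt (n2 d) ^ 2 = n2 d := Real.sq_sqrt hb.le
    have hcle : c d ≤ Real.sqrt (n2 d) := by
      nlinarith [hs, ha0]
    have hf1 : c d / Real.sqrt (n2 d) ≤ 1 := (div_le_one hs).mpr hcle
    have hf0 : 0 ≤ c d / Real.sqrt (n2 d) := div_nonneg ha0 hs.le
    refine ⟨?_, hf1⟩
    have hsq : (c d / Real.sqrt (n2 d)) ^ 2 = (c d) ^ 2 / n2 d := by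
      rw [div_pow, hs2]
    have hg_le_sq : g d ≤ (c d / Real.sqrt (n2 d)) ^ 2 := by
      rw [hsq]
      show 1 - ε₂⁻¹ * (M₁ d / n2 d) - ε₁⁻¹ * (M₂ d / n2 d) ≤ c d ^ 2 / n2 d
      have e : 1 - ε₂⁻¹ * (M₁ d / n2 d) - ε₁⁻¹ * (M₂ d / n2 d)
          = (ε₁ * ε₂ * n2 d - ε₁ * M₁ d - ε₂ * M₂ d) / (ε₁ * ε₂ * n2 d) := by
        field_simp
      rw [e, show (c d) ^ 2 / n2 d = (ε₁ * ε₂ * (c d) ^ 2) / (ε₁ * ε₂ * n2 d) by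
        rw [mul_div_mul_left _ _ (by positivity)]]
      exact (div_le_div_iff_of_pos_right (by positivity)).mpr (by linarith)
    calc g d ≤ (c d / Real.sqrt (n2 d)) ^ 2 := hg_le_sq
      _ ≤ c d / Real.sqrt (n2 d) := by nlinarith [hf0, hf1]
  exact tendsto_of_tendsto_of_tendsto_of_le_of_le hg tendsto_const_nhds
    (fun d => (key d).1) (fun d => (key d).2)
end
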